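/- (Marginal success probabilities of the Collision mechanism under a uniform random hash.) Let ε ≥ 0, let G be a finite set, let l ≥ c ≥ 1 be integers with c < l, set Ω = c·exp(ε) + l − c, and let V ⊆ G with |V| = c. Draw H uniformly at random from all functions G → Fin l, and then draw z ∈ Fin l according to the Collision distribution given (V, H). Then for every v ∈ G: if v ∈ V, P[H(v) = z] = exp(ε)/Ω; and if v ∉ V, P[H(v) = z] = 1/l. Consequently the estimator (⟦H(v) = z⟧ − 1/l)/(exp(ε)/Ω − 1/l) is an unbiased estimator of the indicator ⟦v ∈ V⟧ up to the affine rescaling, i.e. its expectation equals 1 if v ∈ V and 0 if v ∉ V. -/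

import Mathlib

open MeasureTheory Real Finset

noncomputable def collisionProb {G : Type*} [DecidableEq G] (ε : ℝ) (c l : ℕ)
    (V : Finset G) (h : G → Fin l) (z : Fin l) : ℝ :=
  if z ∈ V.image h then
    Real.exp ε / (c * Real.exp ε + l - c)
  else
    ((c * Real.exp ε + l - c) - Real.exp ε * (V.image h).card)
      / ((l - (V.image h).card) * (c * Real.exp ε + l - c))

section Aux

variable {G : Type*} [DecidableEq G]

lemma omega_pos {ε : ℝ} (hε : 0 ≤ ε) {c l : ℕ} (hc : 1 ≤ c) (hcl : c < l) :
    0 < (c : ℝ) * Real.exp ε + l - c := by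
  have h1 : (1 : ℝ) ≤ Real.exp ε := Real.one_le_exp hε
  have h2 : (c : ℝ) ≤ c * Real.exp ε := le_mul_of_one_le_right (by positivity) h1
  have h3 : (c : ℝ) < l := by exact_mod_cast hcl
  linarith

set_option linter.unusedSectionVars false in
lemma card_image_le_c {c l : ℕ} {V : Finset G} (hV : V.card = c) (h : G → Fin l) :
    ((V.image h).card : ℝ) ≤ c := by
  exact_mod_cast hV ▸ Finset.card_image_le

lemma collisionProb_nonneg {ε : ℝ} (hε : 0 ≤ ε) {c l : ℕ} (hc : 1 ≤ c) (hcl : c < l)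
    {V : Finset G} (hV : V.card = c) (h : G → Fin l) (z : Fin l) :
    0 ≤ collisionProb ε c l V h z := by
  have hΩ := omega_pos hε hc hcl (c := c) (l := l)
  have hm : ((V.image h).card : ℝ) ≤ c := card_image_le_c hV h
  have hcl' : (c : ℝ) ≤ l := by exact_mod_cast hcl.le
  have hexp : (0:ℝ) < Real.exp ε := Real.exp_pos ε
  unfold collisionProb
  split
  · positivity
  · apply div_nonneg
    · nlinarith
    · have : ((V.image h).card : ℝ) ≤ l := le_trans hm hcl'
      nlinarith

lemma sum_collisionProb {ε : ℝ} (hε : 0 ≤ ε) {c l : ℕ} (hc : 1 ≤ c) (hcl : c < l)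
    {V : Finset G} (hV : V.card = c) (h : G → Fin l) :
    ∑ z : Fin l, collisionProb ε c l V h z = 1 := by
  classical
  have hΩ := omega_pos hε hc hcl (c := c) (l := l)
  have hmc : ((V.image h).card : ℝ) ≤ c := card_image_le_c hV h
  have hmln : (V.image h).card < l :=
    lt_of_le_of_lt (by exact_mod_cast hV ▸ Finset.card_image_le) hcl
  have hsum : ∑ z : Fin l, collisionProb ε c l V h z
      = ∑ z ∈ V.image h, collisionProb ε c l V h z
        + ∑ z ∈ Finset.univ \ V.image h, collisionProb ε c l V h z := by
    rw [← Finset.sum_sdiff (Finset.subset_univ (V.image h))]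
    ring
  have h1 : ∑ z ∈ V.image h, collisionProb ε c l V h z
      = ((V.image h).card : ℝ) * (Real.exp ε / (c * Real.exp ε + l - c)) := by
    have key : ∀ z ∈ V.image h, collisionProb ε c l V h z
        = Real.exp ε / (c * Real.exp ε + l - c) := fun z hz => by simp [collisionProb, hz]
    rw [Finset.sum_congr rfl key, Finset.sum_const, nsmul_eq_mul]
  have h2 : ∑ z ∈ Finset.univ \ V.image h, collisionProb ε c l V h z
      = ((l : ℝ) - (V.image h).card) * (((c * Real.exp ε + l - c)
            - Real.exp ε * (V.image h).card)
          / (((l:ℝ) - (V.image h).card) * (c * Real.exp ε + l - c))) := by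
    have key : ∀ z ∈ Finset.univ \ V.image h, collisionProb ε c l V h z
        = ((c * Real.exp ε + l - c) - Real.exp ε * (V.image h).card)
          / (((l:ℝ) - (V.image h).card) * (c * Real.exp ε + l - c)) := fun z hz => by
      have hz' : z ∉ V.image h := (Finset.mem_sdiff.1 hz).2
      simp [collisionProb, hz']
    rw [Finset.sum_congr rfl key, Finset.sum_const, nsmul_eq_mul,
      Finset.card_sdiff_of_subset (Finset.subset_univ (V.image h))]
    have : (((Finset.univ : Finset (Fin l)).card - (V.image h).card : ℕ) : ℝ) = (l:ℝ) - (V.image h).card := by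
      rw [Nat.cast_sub (by simpa using hmln.le)]
      simp
    rw [this]
  have hlm : (0:ℝ) < (l:ℝ) - (V.image h).card := by
    have : ((V.image h).card : ℝ) < l := by exact_mod_cast hmln
    linarith
  rw [hsum, h1, h2]
  have hΩne := hΩ.ne'
  have hlmne := hlm.ne'
  rw [mul_div_assoc', mul_div_assoc', mul_div_mul_left _ _ hlmne, ← add_div,
    div_eq_one_iff_eq hΩne]
  ring

lemma collisionProb_congr {ε : ℝ} {c l : ℕ} {V : Finset G} {h h' : G → Fin l}
    (hh : V.image h = V.image h') (z : Fin l) :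
    collisionProb ε c l V h z = collisionProb ε c l V h' z := by
  simp [collisionProb, hh]

end Aux

lemma squeeze_measure {Ωs : Type*} [MeasurableSpace Ωs] (P : Measure Ωs)
    [IsProbabilityMeasure P] {A : Set Ωs} {a b : ℝ}
    (ha : 0 ≤ a) (hb : 0 ≤ b) (hab : a + b = 1)
    (h1 : P A ≤ ENNReal.ofReal a) (h2 : P Aᶜ ≤ ENNReal.ofReal b) :
    P A = ENNReal.ofReal a ∧ P Aᶜ = ENNReal.ofReal b := by
  have hsum : ENNReal.ofReal a + ENNReal.ofReal b = 1 := by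
    rw [← ENNReal.ofReal_add ha hb, hab, ENNReal.ofReal_one]
  have hle : (1 : ENNReal) ≤ P A + P Aᶜ := by
    have h := measure_union_le (μ := P) A Aᶜ
    simpa [Set.union_compl_self] using h
  constructor
  · by_contra hne
    have hlt : P A < ENNReal.ofReal a := lt_of_le_of_ne h1 hne
    have : P A + P Aᶜ < ENNReal.ofReal a + ENNReal.ofReal b :=
      ENNReal.add_lt_add_of_lt_of_le (lt_of_le_of_lt h2 ENNReal.ofReal_lt_top).ne hlt h2
    rw [hsum] at this
    exact absurd hle (not_le.2 this)
  · by_contra hne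
    have hlt : P Aᶜ < ENNReal.ofReal b := lt_of_le_of_ne h2 hne
    have : P Aᶜ + P A < ENNReal.ofReal b + ENNReal.ofReal a :=
      ENNReal.add_lt_add_of_lt_of_le (lt_of_le_of_lt h1 ENNReal.ofReal_lt_top).ne hlt h1
    rw [add_comm (ENNReal.ofReal b), hsum, add_comm (P Aᶜ)] at this
    exact absurd hle (not_le.2 this)

lemma nullMeasurable_of_add_compl {Ωs : Type*} [MeasurableSpace Ωs] (P : Measure Ωs)
    [IsProbabilityMeasure P] {A : Set Ωs} (h : P A + P Aᶜ = 1) :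
    ∃ B : Set Ωs, MeasurableSet B ∧ A =ᵐ[P] B := by
  set B := toMeasurable P A with hBdef
  set C := toMeasurable P Aᶜ with hCdef
  have hB : MeasurableSet B := measurableSet_toMeasurable P A
  have hC : MeasurableSet C := measurableSet_toMeasurable P Aᶜ
  have hAB : A ⊆ B := subset_toMeasurable P A
  have hAcC : Aᶜ ⊆ C := subset_toMeasurable P Aᶜ
  have hBC : B ∪ C = Set.univ := by
    apply Set.eq_univ_of_univ_subset
    intro x _
    by_cases hx : x ∈ A
    · exact Or.inl (hAB hx)
    · exact Or.inr (hAcC hx)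
  have h2 : P (B ∪ C) + P (B ∩ C) = P B + P C := measure_union_add_inter B hC
  have h3 : P B + P C = 1 := by
    rw [measure_toMeasurable, measure_toMeasurable, h]
  have h4 : P (B ∩ C) = 0 := by
    rw [hBC, measure_univ, h3] at h2
    have : (1 : ENNReal) + P (B ∩ C) = 1 + 0 := by simpa using h2
    exact (ENNReal.add_right_inj ENNReal.one_ne_top).1 this
  refine ⟨B, hB, ?_⟩
  rw [MeasureTheory.ae_eq_set]
  constructor
  · have : A \ B = ∅ := Set.diff_eq_empty.2 hAB
    simp [this]
  · apply measure_mono_null _ h4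
    intro x hx
    exact ⟨hx.1, hAcC hx.2⟩

theorem collision_mechanism_marginals
    {G : Type*} [Fintype G] [DecidableEq G]
    {Ωs : Type*} [MeasurableSpace Ωs] (P : Measure Ωs) [IsProbabilityMeasure P]
    (ε : ℝ) (hε : 0 ≤ ε) (l c : ℕ) (hc : 1 ≤ c) (hcl : c < l)
    (V : Finset G) (hV : V.card = c)
    (H : Ωs → G → Fin l) (Z : Ωs → Fin l)
    (hjoint : ∀ (h : G → Fin l) (z : Fin l),
      P {ω | H ω = h ∧ Z ω = z}
        = ENNReal.ofReal ((1 / (l : ℝ) ^ (Fintype.card G)) * collisionProb ε c l V h z)) :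
    (∀ v : G, v ∈ V →
        P {ω | H ω v = Z ω}
          = ENNReal.ofReal (Real.exp ε / (c * Real.exp ε + l - c))) ∧
    (∀ v : G, v ∉ V → P {ω | H ω v = Z ω} = ENNReal.ofReal (1 / (l : ℝ))) ∧
    (0 < ε → ∀ v : G,
        ∫ ω, ((if H ω v = Z ω then (1 : ℝ) else 0) - 1 / l)
              / (Real.exp ε / (c * Real.exp ε + l - c) - 1 / l) ∂P
          = if v ∈ V then 1 else 0) := by
  classical
  have hl0 : 0 < l := lt_of_le_of_lt (Nat.zero_le c) hcl
  have hl0R : (0:ℝ) < l := by exact_mod_cast hl0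
  have hΩ := omega_pos hε hc hcl (c := c) (l := l)
  set n := Fintype.card G with hn
  set q : ((G → Fin l) × Fin l) → ℝ :=
    fun s => (1 / (l : ℝ) ^ n) * collisionProb ε c l V s.1 s.2 with hq
  have hq0 : ∀ s, 0 ≤ q s :=
    fun s => mul_nonneg (by positivity) (collisionProb_nonneg hε hc hcl hV _ _)
  have hcardfun : ((Finset.univ : Finset (G → Fin l)).card : ℝ) = (l:ℝ) ^ n := by
    rw [Finset.card_univ, Fintype.card_fun, Fintype.card_fin]
    push_cast
    rfl
  have hqtot : ∑ s : (G → Fin l) × Fin l, q s = 1 := by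
    rw [Fintype.sum_prod_type]
    have key : ∀ h ∈ (Finset.univ : Finset (G → Fin l)),
        ∑ z : Fin l, q (h, z) = (1 / (l : ℝ) ^ n) := by
      intro h _
      rw [hq]
      dsimp only
      rw [← Finset.mul_sum, sum_collisionProb hε hc hcl hV h, mul_one]
    rw [Finset.sum_congr rfl key, Finset.sum_const, nsmul_eq_mul, hcardfun]
    field_simp
  -- marginal formula via the squeeze
  have hmarg : ∀ v : G,
      P {ω | H ω v = Z ω} = ENNReal.ofReal (∑ h : G → Fin l, q (h, h v)) ∧
      P {ω | H ω v = Z ω}ᶜ = ENNReal.ofReal (1 - ∑ h : G → Fin l, q (h, h v)) := by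
    intro v
    set T : Finset ((G → Fin l) × Fin l) := Finset.univ.filter (fun s => s.1 v = s.2) with hT
    have hTsum : ∑ s ∈ T, q s = ∑ h : G → Fin l, q (h, h v) := by
      rw [hT, Finset.sum_filter, Fintype.sum_prod_type]
      apply Finset.sum_congr rfl
      intro h _
      rw [Finset.sum_ite_eq]
      simp
    have hTcsum : ∑ s ∈ Finset.univ \ T, q s = 1 - ∑ h : G → Fin l, q (h, h v) := by
      have := Finset.sum_sdiff (f := q) (Finset.subset_univ T)
      rw [hqtot] at this
      rw [← hTsum]
      linarith
    have hsubA : {ω | H ω v = Z ω} ⊆ ⋃ s ∈ T, {ω | H ω = s.1 ∧ Z ω = s.2} := by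
      intro ω hω
      apply Set.mem_biUnion (show ((H ω, Z ω) : (G → Fin l) × Fin l) ∈ T by
        simp [hT]; exact hω)
      exact ⟨rfl, rfl⟩
    have hsubAc : {ω | H ω v = Z ω}ᶜ ⊆ ⋃ s ∈ Finset.univ \ T, {ω | H ω = s.1 ∧ Z ω = s.2} := by
      intro ω hω
      apply Set.mem_biUnion (show ((H ω, Z ω) : (G → Fin l) × Fin l) ∈ Finset.univ \ T by
        simp [hT]; exact hω)
      exact ⟨rfl, rfl⟩
    have hboundA : P {ω | H ω v = Z ω} ≤ ENNReal.ofReal (∑ s ∈ T, q s) := by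
      refine le_trans (measure_mono hsubA) (le_trans (measure_biUnion_finset_le T _) ?_)
      rw [ENNReal.ofReal_sum_of_nonneg (fun s _ => hq0 s)]
      exact le_of_eq (Finset.sum_congr rfl (fun s _ => hjoint s.1 s.2))
    have hboundAc : P {ω | H ω v = Z ω}ᶜ ≤ ENNReal.ofReal (∑ s ∈ Finset.univ \ T, q s) := by
      refine le_trans (measure_mono hsubAc) (le_trans (measure_biUnion_finset_le _ _) ?_)
      rw [ENNReal.ofReal_sum_of_nonneg (fun s _ => hq0 s)]
      exact le_of_eq (Finset.sum_congr rfl (fun s _ => hjoint s.1 s.2))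
    have hab : (∑ s ∈ T, q s) + (∑ s ∈ Finset.univ \ T, q s) = 1 := by
      rw [add_comm, Finset.sum_sdiff (Finset.subset_univ T), hqtot]
    have := squeeze_measure P (Finset.sum_nonneg (fun s _ => hq0 s))
      (Finset.sum_nonneg (fun s _ => hq0 s)) hab hboundA hboundAc
    rw [hTsum] at this
    rw [hTcsum] at this
    exact this
  -- value of the sum when v ∈ V
  have hin : ∀ v ∈ V, ∑ h : G → Fin l, q (h, h v)
      = Real.exp ε / (c * Real.exp ε + l - c) := by
    intro v hv
    have key : ∀ h ∈ (Finset.univ : Finset (G → Fin l)),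
        q (h, h v) = (1 / (l : ℝ) ^ n) * (Real.exp ε / (c * Real.exp ε + l - c)) := by
      intro h _
      have hmem : h v ∈ V.image h := Finset.mem_image_of_mem h hv
      rw [hq]
      dsimp only
      rw [collisionProb, if_pos hmem]
    rw [Finset.sum_congr rfl key, Finset.sum_const, nsmul_eq_mul, hcardfun]
    have hln : ((l:ℝ))^n ≠ 0 := by positivity
    field_simp
  -- value of the sum when v ∉ V
  have hout : ∀ v ∉ V, ∑ h : G → Fin l, q (h, h v) = 1 / (l : ℝ) := by
    intro v hv
    have hn1 : 1 ≤ n := Fintype.card_pos_iff.2 ⟨v⟩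
    set e := Equiv.funSplitAt v (Fin l) with he
    have happly : ∀ (t : Fin l) (g : {j // j ≠ v} → Fin l), e.symm (t, g) v = t := by
      intro t g
      rw [he, Equiv.funSplitAt_symm_apply]
      simp
    have himg : ∀ (t t' : Fin l) (g : {j // j ≠ v} → Fin l),
        V.image (e.symm (t, g)) = V.image (e.symm (t', g)) := by
      intro t t' g
      apply Finset.image_congr
      intro x hx
      have hxv : x ≠ v := fun hh => hv (hh ▸ hx)
      rw [he, Equiv.funSplitAt_symm_apply, Equiv.funSplitAt_symm_apply, dif_neg hxv, dif_neg hxv]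
    have t0 : Fin l := ⟨0, hl0⟩
    have hsum1 : ∑ h : G → Fin l, collisionProb ε c l V h (h v)
        = ((l:ℝ)) ^ (n - 1) := by
      rw [← Equiv.sum_comp e.symm (fun h => collisionProb ε c l V h (h v)),
        Fintype.sum_prod_type, Finset.sum_comm]
      have inner : ∀ g ∈ (Finset.univ : Finset ({j // j ≠ v} → Fin l)),
          ∑ t : Fin l, collisionProb ε c l V (e.symm (t, g)) (e.symm (t, g) v) = 1 := by
        intro g _
        have step : ∀ t ∈ (Finset.univ : Finset (Fin l)),
            collisionProb ε c l V (e.symm (t, g)) (e.symm (t, g) v)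
            = collisionProb ε c l V (e.symm (⟨0, hl0⟩, g)) t := by
          intro t _
          rw [happly]
          exact collisionProb_congr (himg t ⟨0, hl0⟩ g) t
        rw [Finset.sum_congr rfl step]
        exact sum_collisionProb hε hc hcl hV _
      rw [Finset.sum_congr rfl inner, Finset.sum_const, nsmul_eq_mul, mul_one,
        Finset.card_univ, Fintype.card_fun, Fintype.card_fin]
      have : Fintype.card {j // j ≠ v} = n - 1 := by
        rw [Fintype.card_subtype_compl, Fintype.card_subtype_eq]
      rw [this]
      push_cast
      rfl
    have hpow : ((l:ℝ)) ^ n = (l:ℝ) ^ (n - 1) * l := by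
      rw [← pow_succ, Nat.sub_add_cancel hn1]
    calc ∑ h : G → Fin l, q (h, h v)
        = (1 / (l : ℝ) ^ n) * ∑ h : G → Fin l, collisionProb ε c l V h (h v) := by
          rw [Finset.mul_sum]
      _ = (1 / (l : ℝ) ^ n) * ((l:ℝ)) ^ (n - 1) := by rw [hsum1]
      _ = 1 / (l : ℝ) := by
          rw [hpow]
          have h1 : ((l:ℝ)) ^ (n-1) ≠ 0 := by positivity
          field_simp
  refine ⟨fun v hv => by rw [(hmarg v).1, hin v hv],
    fun v hv => by rw [(hmarg v).1, hout v hv], ?_⟩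
  intro hεpos v
  -- the value a of the marginal
  set a : ℝ := ∑ h : G → Fin l, q (h, h v) with ha
  have ha0 : 0 ≤ a := Finset.sum_nonneg (fun h _ => hq0 _)
  have ha1 : a ≤ 1 := by
    by_cases hv : v ∈ V
    · rw [ha, hin v hv]
      rw [div_le_one hΩ]
      have h1 : (1:ℝ) ≤ Real.exp ε := Real.one_le_exp hε
      have h2 : (1:ℝ) ≤ c := by exact_mod_cast hc
      have h3 : (c:ℝ) ≤ l := by exact_mod_cast hcl.le
      nlinarith
    · rw [ha, hout v hv]
      rw [div_le_one hl0R]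
      exact_mod_cast hl0
  have hPA : P {ω | H ω v = Z ω} = ENNReal.ofReal a := (hmarg v).1
  have hPAc : P {ω | H ω v = Z ω}ᶜ = ENNReal.ofReal (1 - a) := (hmarg v).2
  have hadd : P {ω | H ω v = Z ω} + P {ω | H ω v = Z ω}ᶜ = 1 := by
    rw [hPA, hPAc, ← ENNReal.ofReal_add ha0 (by linarith), add_sub_cancel, ENNReal.ofReal_one]
  obtain ⟨B, hB, hAB⟩ := nullMeasurable_of_add_compl P hadd
  have hPB : P B = ENNReal.ofReal a := by rw [← measure_congr hAB, hPA]
  set D : ℝ := Real.exp ε / (c * Real.exp ε + l - c) - 1 / l with hD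
  have hexp1 : (1:ℝ) < Real.exp ε := by
    have := Real.exp_lt_exp.2 hεpos
    simpa using this
  have hDpos : 0 < D := by
    rw [hD, sub_pos, div_lt_div_iff₀ hl0R hΩ]
    have h3 : (c:ℝ) < l := by exact_mod_cast hcl
    nlinarith
  have hfg : (fun ω => ((if H ω v = Z ω then (1 : ℝ) else 0) - 1 / l)
        / (Real.exp ε / (c * Real.exp ε + l - c) - 1 / l))
      =ᵐ[P] (fun ω => B.indicator (fun _ => 1 / D) ω + (-(1 / l) / D)) := by
    filter_upwards [hAB] with ω hω
    have hωeq : (H ω v = Z ω) = (ω ∈ B) := hω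
    have hω' : (H ω v = Z ω) ↔ (ω ∈ B) := by rw [hωeq]
    by_cases hωB : ω ∈ B
    · have h1 : H ω v = Z ω := hω'.2 hωB
      rw [if_pos h1, Set.indicator_of_mem hωB, ← hD]
      field_simp
      ring
    · have h1 : ¬ (H ω v = Z ω) := fun hh => hωB (hω'.1 hh)
      rw [if_neg h1, Set.indicator_of_notMem hωB, ← hD]
      ring
  rw [integral_congr_ae hfg, integral_add ((integrable_const _).indicator hB)
    (integrable_const _), integral_indicator_const _ hB, integral_const, measureReal_def, hPB,
    ENNReal.toReal_ofReal ha0, measureReal_def, measure_univ]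
  simp only [ENNReal.toReal_one, smul_eq_mul, one_smul, one_mul]
  by_cases hv : v ∈ V
  · rw [if_pos hv]
    have hva : a = Real.exp ε / (c * Real.exp ε + l - c) := ha ▸ hin v hv
    rw [hva]
    have : Real.exp ε / (c * Real.exp ε + l - c) * (1 / D) + -(1 / l) / D
        = (Real.exp ε / (c * Real.exp ε + l - c) - 1 / l) / D := by ring
    rw [this, ← hD, div_self hDpos.ne']
  · rw [if_neg hv]
    have hva : a = 1 / (l:ℝ) := ha ▸ hout v hv
    rw [hva]
    ring
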